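/- Let α_1, …, α_d be complex numbers with Σ_{k≥0} λ(p^k)x^k = exp(Σ_{v≥1} a(p^v) x^v/v) where a(p^v) = Σ_j α_j^v, and let Σ_{k≥0} μ(p^k)x^k = exp(Σ_{v≥1} |a(p^v)|^2 x^v/v). Then |λ(p^k)|^2 ≤ μ(p^k) for all k ≥ 0. -/

import Mathlib

open Finset Metric

noncomputable def recC (b : ℕ → ℂ) : ℕ → ℂ
  | 0 => 1
  | (k+1) => (∑ v ∈ Finset.range (k+1), b v * recC b (k-v)) / ((k : ℂ) + 1)
  decreasing_by exact Nat.lt_succ_of_le (Nat.sub_le k v)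

@[simp] lemma recC_zero (b : ℕ → ℂ) : recC b 0 = 1 := by simp [recC]

lemma recC_succ (b : ℕ → ℂ) (k : ℕ) :
    recC b (k+1) = (∑ v ∈ Finset.range (k+1), b v * recC b (k-v)) / ((k : ℂ) + 1) := by
  rw [recC]

lemma norm_cast_succ (k : ℕ) : ‖((k : ℂ) + 1)‖ = (k : ℝ) + 1 := by
  have : ((k : ℂ) + 1) = ((k + 1 : ℕ) : ℂ) := by push_cast; ring
  rw [this, Complex.norm_natCast]; push_cast; ring

lemma recC_bound (b : ℕ → ℂ) (B : ℝ) (hB : 1 ≤ B) (hb : ∀ v, ‖b v‖ ≤ B ^ (v+1)) :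
    ∀ k, ‖recC b k‖ ≤ (2*B) ^ k := by
  have hBpos : (0:ℝ) < B := lt_of_lt_of_le one_pos hB
  intro k
  induction k using Nat.strong_induction_on with
  | _ k ih =>
    match k with
    | 0 => simp
    | (k+1) =>
      rw [recC_succ, norm_div, norm_cast_succ]
      have hk1 : (0:ℝ) < (k:ℝ) + 1 := by positivity
      rw [div_le_iff₀ hk1]
      calc ‖∑ v ∈ Finset.range (k+1), b v * recC b (k-v)‖
          ≤ ∑ v ∈ Finset.range (k+1), ‖b v‖ * ‖recC b (k-v)‖ := by
            refine (norm_sum_le _ _).trans_eq ?_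
            exact Finset.sum_congr rfl fun v _ => norm_mul _ _
        _ ≤ ∑ v ∈ Finset.range (k+1), B^(v+1) * (2*B)^(k-v) := by
            refine Finset.sum_le_sum fun v hv => ?_
            exact mul_le_mul (hb v) (ih (k-v) (Nat.lt_succ_of_le (Nat.sub_le k v)))
                (norm_nonneg _) (by positivity)
        _ ≤ ∑ v ∈ Finset.range (k+1), B^(k+1) * 2^k := by
            refine Finset.sum_le_sum fun v hv => ?_
            rw [Finset.mem_range, Nat.lt_succ_iff] at hv
            rw [mul_pow]
            have h1 : B^(v+1) * B^(k-v) = B^(k+1) := by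
              rw [← pow_add]; congr 1; omega
            calc B^(v+1) * (2^(k-v) * B^(k-v))
                = (B^(v+1) * B^(k-v)) * 2^(k-v) := by ring
              _ = B^(k+1) * 2^(k-v) := by rw [h1]
              _ ≤ B^(k+1) * 2^k := by
                  refine mul_le_mul_of_nonneg_left ?_ (by positivity)
                  exact pow_le_pow_right₀ one_le_two (Nat.sub_le k v)
        _ = ((k:ℝ)+1) * (B^(k+1) * 2^k) := by
            rw [Finset.sum_const, Finset.card_range]; push_cast; ring
        _ ≤ (2*B)^(k+1) * ((k:ℝ)+1) := by
            rw [mul_pow, mul_comm ((2:ℝ)^(k+1) * B^(k+1)) _]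
            refine mul_le_mul_of_nonneg_left ?_ (by positivity)
            rw [mul_comm]
            exact mul_le_mul_of_nonneg_right
              (pow_le_pow_right₀ one_le_two (Nat.le_succ k)) (by positivity)

lemma summable_norm_aux' {c : ℕ → ℂ} {A C : ℝ} (hA : 0 ≤ A)
    (hc : ∀ k, ‖c k‖ ≤ C * A ^ k) {x : ℂ} (hx : A * ‖x‖ < 1) :
    Summable (fun k => ‖c k * x ^ k‖) := by
  have hb : ∀ k, ‖c k * x^k‖ ≤ C * (A*‖x‖)^k := fun k => by
    rw [norm_mul, norm_pow, mul_pow, ← mul_assoc]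
    exact mul_le_mul_of_nonneg_right (hc k) (by positivity)
  exact Summable.of_nonneg_of_le (fun k => norm_nonneg _) hb
    ((summable_geometric_of_lt_one (by positivity) hx).mul_left C)


lemma hasDerivAt_psum {c : ℕ → ℂ} {A : ℝ} (hA : 1 ≤ A) (hc : ∀ k, ‖c k‖ ≤ A ^ k) {x : ℂ}
    (hx : ‖x‖ < 1/(2*A)) :
    HasDerivAt (fun y : ℂ => ∑' k, c k * y ^ k)
      (∑' k : ℕ, ((k:ℂ)+1) * c (k+1) * x ^ k) x := by
  have hA0 : (0:ℝ) < A := lt_of_lt_of_le one_pos hA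
  have hAne : A ≠ 0 := ne_of_gt hA0
  set g' : ℕ → ℂ → ℂ := fun n y => (n:ℂ) * c n * y^(n-1) with hg'def
  set u : ℕ → ℝ := fun n => 2*A*((n:ℝ)*(1/2)^n) with hudef
  have hu : Summable u := by
    have := summable_pow_mul_geometric_of_norm_lt_one (R := ℝ) 1 (r := 1/2)
      (by rw [Real.norm_eq_abs, abs_of_pos] <;> norm_num)
    simpa [hudef, pow_one, mul_assoc] using this.mul_left (2*A)
  have hbound : ∀ (n : ℕ) (y : ℂ), y ∈ ball (0:ℂ) (1/(2*A)) → ‖g' n y‖ ≤ u n := by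
    intro n y hy
    rw [mem_ball, dist_zero_right] at hy
    match n with
    | 0 => simp [hg'def, hudef]
    | (n+1) =>
      have hyn : ‖y‖^n ≤ (1/(2*A))^n :=
        pow_le_pow_left₀ (norm_nonneg _) (le_of_lt hy) n
      have h1 : ‖g' (n+1) y‖ = ((n:ℝ)+1) * ‖c (n+1)‖ * ‖y‖^n := by
        simp only [hg'def, norm_mul, norm_pow, Nat.add_sub_cancel, Nat.cast_add,
          Nat.cast_one, norm_cast_succ]
      rw [h1]
      have h2 : ((n:ℝ)+1) * ‖c (n+1)‖ * ‖y‖^n ≤ ((n:ℝ)+1) * A^(n+1) * (1/(2*A))^n := by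
        have := hc (n+1)
        gcongr
      refine h2.trans (le_of_eq ?_)
      simp only [hudef]
      push_cast
      have key : A^n * (1/(2*A))^n = (1/2)^n := by
        rw [← mul_pow]; congr 1; field_simp
      linear_combination ((n:ℝ)+1) * A * key
  have hderiv : ∀ (n : ℕ) (y : ℂ), y ∈ ball (0:ℂ) (1/(2*A)) →
      HasDerivAt (fun z : ℂ => c n * z^n) (g' n y) y := by
    intro n y _
    have h := (hasDerivAt_pow n y).const_mul (c n)
    exact h.congr_deriv (by show _ = (n:ℂ) * c n * y^(n-1); ring)
  have hg0 : Summable (fun n => c n * (0:ℂ)^n) := by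
    refine summable_of_ne_finset_zero (s := ({0} : Finset ℕ)) fun n hn => ?_
    rw [Finset.mem_singleton] at hn
    simp [zero_pow hn]
  have hr : (0:ℝ) < 1/(2*A) := by positivity
  have hxball : x ∈ ball (0:ℂ) (1/(2*A)) := by rwa [mem_ball, dist_zero_right]
  have main := hasDerivAt_tsum_of_isPreconnected hu isOpen_ball
    (convex_ball (0:ℂ) (1/(2*A))).isPreconnected hderiv hbound
    (mem_ball_self hr) hg0 hxball
  refine main.congr_deriv ?_
  have hsum : Summable (fun n => g' n x) :=
    Summable.of_norm_bounded hu (fun n => hbound n x hxball)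
  rw [hsum.tsum_eq_zero_add]
  have h0 : g' 0 x = 0 := by simp [hg'def]
  rw [h0, zero_add]
  refine tsum_congr fun k => ?_
  simp only [hg'def, Nat.add_sub_cancel]
  push_cast
  ring

noncomputable def shiftCoeff (b : ℕ → ℂ) : ℕ → ℂ
  | 0 => 0
  | (v+1) => b v / ((v:ℂ)+1)

lemma exp_eq (b : ℕ → ℂ) (B : ℝ) (hB : 1 ≤ B) (hb : ∀ v, ‖b v‖ ≤ B ^ (v+1)) {x : ℂ}
    (hx : ‖x‖ < 1/(8*B)) :
    HasSum (fun k : ℕ => recC b k * x ^ k)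
      (Complex.exp (∑' v : ℕ, b v * x ^ (v+1) / ((v:ℂ)+1))) := by
  have hB0 : (0:ℝ) < B := lt_of_lt_of_le one_pos hB
  have hr8 : (0:ℝ) < 1/(8*B) := by positivity
  have hL : ∀ k, ‖recC b k‖ ≤ (2*B)^k := recC_bound b B hB hb
  have hL' : ∀ k, ‖recC b k‖ ≤ 1 * (2*B)^k := fun k => by rw [one_mul]; exact hL k
  have hb' : ∀ k, ‖b k‖ ≤ B * B^k := fun k => by
    have := hb k; rwa [pow_succ, mul_comm (B^k) B] at this
  have hsh : ∀ k, ‖shiftCoeff b k‖ ≤ B^k := by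
    intro k
    match k with
    | 0 => simp [shiftCoeff]
    | (v+1) =>
      show ‖b v / ((v:ℂ)+1)‖ ≤ B^(v+1)
      rw [norm_div, norm_cast_succ]
      refine le_trans ?_ (hb v)
      exact div_le_self (norm_nonneg _) (by push_cast; linarith [Nat.cast_nonneg (α := ℝ) v])
  -- derivative of F
  have hradius : 1/(8*B) ≤ 1/(2*(2*B)) := by
    apply one_div_le_one_div_of_le (by positivity); linarith
  have hradius2 : 1/(8*B) ≤ 1/(2*B) := by
    apply one_div_le_one_div_of_le (by positivity); linarith
  have hyF : ∀ y ∈ ball (0:ℂ) (1/(8*B)), HasDerivAt (fun y : ℂ => ∑' k : ℕ, recC b k * y ^ k)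
      (∑' k : ℕ, ((k:ℂ)+1) * recC b (k+1) * y ^ k) y := by
    intro y hy
    rw [mem_ball, dist_zero_right] at hy
    exact hasDerivAt_psum (A := 2*B) (by linarith) hL (lt_of_lt_of_le hy hradius)
  have hyG : ∀ y ∈ ball (0:ℂ) (1/(8*B)),
      HasDerivAt (fun y : ℂ => ∑' k : ℕ, shiftCoeff b k * y ^ k)
      (∑' k : ℕ, b k * y ^ k) y := by
    intro y hy
    rw [mem_ball, dist_zero_right] at hy
    have h := hasDerivAt_psum (A := B) hB hsh (lt_of_lt_of_le hy hradius2)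
    convert h using 1
    refine tsum_congr fun k => ?_
    show b k * y ^ k = ((k:ℂ)+1) * shiftCoeff b (k+1) * y ^ k
    have hne : ((k:ℂ)+1) ≠ 0 := by
      have := Nat.cast_add_one_ne_zero (R := ℂ) k; push_cast at this ⊢; exact this
    show b k * y ^ k = ((k:ℂ)+1) * (b k / ((k:ℂ)+1)) * y ^ k
    rw [mul_comm ((k:ℂ)+1) _, div_mul_cancel₀ _ hne]
  -- Cauchy product identity
  have key : ∀ y ∈ ball (0:ℂ) (1/(8*B)),
      ∑' k : ℕ, ((k:ℂ)+1) * recC b (k+1) * y ^ k =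
      (∑' k : ℕ, b k * y ^ k) * (∑' k : ℕ, recC b k * y ^ k) := by
    intro y hy
    rw [mem_ball, dist_zero_right] at hy
    have hBy : B * ‖y‖ < 1 := by
      have h1 : ‖y‖ < 1/B := lt_of_lt_of_le hy
        (one_div_le_one_div_of_le (by positivity) (by linarith))
      rw [lt_div_iff₀ hB0, mul_comm] at h1; exact h1
    have h2By : (2*B) * ‖y‖ < 1 := by
      have h1 : ‖y‖ < 1/(2*B) := lt_of_lt_of_le hy hradius2
      rw [lt_div_iff₀ (by positivity), mul_comm] at h1; exact h1
    have hn1 : Summable (fun k => ‖b k * y ^ k‖) :=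
      summable_norm_aux' (le_of_lt hB0) hb' hBy
    have hn2 : Summable (fun k => ‖recC b k * y ^ k‖) :=
      summable_norm_aux' (by positivity) hL' h2By
    rw [tsum_mul_tsum_eq_tsum_sum_antidiagonal_of_summable_norm hn1 hn2]
    refine tsum_congr fun n => Eq.symm ?_
    rw [Finset.Nat.sum_antidiagonal_eq_sum_range_succ_mk]
    have hterm : ∀ k ∈ Finset.range (n+1),
        b k * y ^ k * (recC b (n-k) * y ^ (n-k)) = b k * recC b (n-k) * y ^ n := by
      intro k hk
      rw [Finset.mem_range, Nat.lt_succ_iff] at hk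
      have hpow : y ^ k * y ^ (n-k) = y ^ n := by rw [← pow_add]; congr 1; omega
      calc b k * y ^ k * (recC b (n-k) * y ^ (n-k))
          = b k * recC b (n-k) * (y ^ k * y ^ (n-k)) := by ring
        _ = b k * recC b (n-k) * y ^ n := by rw [hpow]
    rw [Finset.sum_congr rfl hterm, ← Finset.sum_mul]
    have hne : ((n:ℂ)+1) ≠ 0 := by
      have := Nat.cast_add_one_ne_zero (R := ℂ) n; push_cast at this ⊢; exact this
    have hrec : (∑ k ∈ Finset.range (n+1), b k * recC b (n-k)) = ((n:ℂ)+1) * recC b (n+1) := by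
      rw [recC_succ, mul_div_cancel₀ _ hne]
    rw [hrec]
  -- H has zero derivative
  have hH : ∀ y ∈ ball (0:ℂ) (1/(8*B)),
      HasDerivAt (fun y : ℂ => (∑' k : ℕ, recC b k * y ^ k) *
        Complex.exp (-(∑' k : ℕ, shiftCoeff b k * y ^ k))) 0 y := by
    intro y hy
    have hd := (hyF y hy).mul (((hyG y hy).neg).cexp)
    exact hd.congr_deriv (by rw [key y hy]; ring)
  -- constancy
  have hxS : x ∈ ball (0:ℂ) (1/(8*B)) := by rwa [mem_ball, dist_zero_right]
  have hconst : (∑' k : ℕ, recC b k * x ^ k) *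
      Complex.exp (-(∑' k : ℕ, shiftCoeff b k * x ^ k)) =
      (∑' k : ℕ, recC b k * (0:ℂ) ^ k) *
      Complex.exp (-(∑' k : ℕ, shiftCoeff b k * (0:ℂ) ^ k)) := by
    refine (convex_ball (0:ℂ) (1/(8*B))).is_const_of_fderivWithin_eq_zero (𝕜 := ℂ)
      (fun z hz => ((hH z hz).differentiableAt).differentiableWithinAt)
      (fun z hz => ?_) hxS (mem_ball_self hr8)
    rw [fderivWithin_of_isOpen isOpen_ball hz, ((hH z hz).hasFDerivAt).fderiv]
    apply ContinuousLinearMap.ext; intro w; simp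
  have hF0 : (∑' k : ℕ, recC b k * (0:ℂ) ^ k) = 1 := by
    rw [tsum_eq_single 0 (fun k hk => by simp [zero_pow hk])]
    simp
  have hG0 : (∑' k : ℕ, shiftCoeff b k * (0:ℂ) ^ k) = 0 := by
    rw [tsum_eq_single 0 (fun k hk => by simp [zero_pow hk])]
    simp [shiftCoeff]
  rw [hF0, hG0] at hconst
  simp only [neg_zero, Complex.exp_zero, one_mul, mul_one] at hconst
  -- conclude F x = exp (Gp x)
  have hFexp : (∑' k : ℕ, recC b k * x ^ k) =
      Complex.exp (∑' k : ℕ, shiftCoeff b k * x ^ k) := by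
    have he : Complex.exp (-(∑' k : ℕ, shiftCoeff b k * x ^ k)) *
        Complex.exp (∑' k : ℕ, shiftCoeff b k * x ^ k) = 1 := by
      rw [← Complex.exp_add]; simp
    calc (∑' k : ℕ, recC b k * x ^ k)
        = (∑' k : ℕ, recC b k * x ^ k) *
          (Complex.exp (-(∑' k : ℕ, shiftCoeff b k * x ^ k)) *
           Complex.exp (∑' k : ℕ, shiftCoeff b k * x ^ k)) := by rw [he, mul_one]
      _ = ((∑' k : ℕ, recC b k * x ^ k) *
          Complex.exp (-(∑' k : ℕ, shiftCoeff b k * x ^ k))) *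
           Complex.exp (∑' k : ℕ, shiftCoeff b k * x ^ k) := by ring
      _ = Complex.exp (∑' k : ℕ, shiftCoeff b k * x ^ k) := by rw [hconst, one_mul]
  -- identify Gp x with the statement tsum
  have hBx : B * ‖x‖ < 1 := by
    have h1 : ‖x‖ < 1/B := lt_of_lt_of_le hx
      (one_div_le_one_div_of_le (by positivity) (by linarith))
    rw [lt_div_iff₀ hB0, mul_comm] at h1; exact h1
  have h2Bx : (2*B) * ‖x‖ < 1 := by
    have h1 : ‖x‖ < 1/(2*B) := lt_of_lt_of_le hx hradius2
    rw [lt_div_iff₀ (by positivity), mul_comm] at h1; exact h1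
  have hsG : Summable (fun k : ℕ => shiftCoeff b k * x ^ k) :=
    (summable_norm_aux' (C := 1) (le_of_lt hB0) (fun k => by rw [one_mul]; exact hsh k) hBx).of_norm
  have hGpx : (∑' k : ℕ, shiftCoeff b k * x ^ k) =
      ∑' v : ℕ, b v * x ^ (v+1) / ((v:ℂ)+1) := by
    rw [hsG.tsum_eq_zero_add]
    have h0 : shiftCoeff b 0 * x ^ 0 = 0 := by simp [shiftCoeff]
    rw [h0, zero_add]
    refine tsum_congr fun v => ?_
    show b v / ((v:ℂ)+1) * x ^ (v+1) = b v * x ^ (v+1) / ((v:ℂ)+1)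
    ring
  have hsF : Summable (fun k : ℕ => recC b k * x ^ k) :=
    (summable_norm_aux' (by positivity) hL' h2Bx).of_norm
  rw [Summable.hasSum_iff hsF, hFexp, hGpx]


lemma coeff_eq_zero {c : ℕ → ℂ} {δ : ℝ} (hδ : 0 < δ)
    (h : ∀ x : ℂ, ‖x‖ < δ → HasSum (fun k : ℕ => c k * x ^ k) 0) : ∀ k, c k = 0 := by
  set ρ : ℝ := δ/2 with hρdef
  have hρ : 0 < ρ := by positivity
  have hρδ : ρ < δ := by rw [hρdef]; linarith
  have hx₁ : ‖((ρ:ℝ) : ℂ)‖ < δ := by rwa [Complex.norm_real, Real.norm_eq_abs, abs_of_pos hρ]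
  have hsum₁ := (h _ hx₁).summable
  have htend := hsum₁.tendsto_atTop_zero.norm
  rw [norm_zero] at htend
  obtain ⟨C, hC⟩ := htend.bddAbove_range
  have hCb : ∀ k, ‖c k‖ * ρ^k ≤ C := by
    intro k
    have := hC (Set.mem_range_self k)
    rwa [norm_mul, norm_pow, Complex.norm_real, Real.norm_eq_abs, abs_of_pos hρ] at this
  have hC0 : 0 ≤ C := le_trans (by positivity) (hCb 0)
  set A : ℝ := 2/δ with hAdef
  have hA0 : 0 < A := by positivity
  have hρA : ρ * A = 1 := by rw [hρdef, hAdef]; field_simp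
  have hbd : ∀ k, ‖c k‖ ≤ C * A^k := by
    intro k
    have h1 : ‖c k‖ = (‖c k‖ * ρ^k) * A^k := by
      rw [mul_assoc, ← mul_pow, hρA, one_pow, mul_one]
    rw [h1]
    exact mul_le_mul_of_nonneg_right (hCb k) (by positivity)
  intro n
  induction n using Nat.strong_induction_on with
  | _ n ih =>
    have hsmall : ∀ ε > 0, ‖c n‖ ≤ ε := by
      intro ε hε
      set K : ℝ := 2*C*A^(n+1) with hKdef
      have hK0 : 0 ≤ K := by positivity
      set r : ℝ := min (min ρ (1/(2*A))) (ε/(K+1)) with hrdef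
      have hr0 : 0 < r := by
        refine lt_min (lt_min hρ (by positivity)) (by positivity)
      have hrρ : r ≤ ρ := le_trans (min_le_left _ _) (min_le_left _ _)
      have hrA : r ≤ 1/(2*A) := le_trans (min_le_left _ _) (min_le_right _ _)
      have hrε : r ≤ ε/(K+1) := min_le_right _ _
      set x : ℂ := ((r:ℝ) : ℂ) with hxdef
      have hxnorm : ‖x‖ = r := by rw [hxdef, Complex.norm_real, Real.norm_eq_abs, abs_of_pos hr0]
      have hxδ : ‖x‖ < δ := by rw [hxnorm]; linarith
      have hxne : x ≠ 0 := by
        rw [hxdef]; exact_mod_cast ne_of_gt hr0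
      have hs := (h x hxδ).summable
      have htsum := (h x hxδ).tsum_eq
      have hzero : ∀ i ∈ Finset.range n, c i * x ^ i = 0 := by
        intro i hi
        rw [Finset.mem_range] at hi
        rw [ih i hi, zero_mul]
      have htail : (∑' i : ℕ, c (i+n) * x ^ (i+n)) = 0 := by
        have := hs.sum_add_tsum_nat_add n
        rw [htsum, Finset.sum_eq_zero hzero, zero_add] at this
        exact this
      have hfact : ∀ i : ℕ, c (i+n) * x ^ (i+n) = x^n * (c (i+n) * x ^ i) := by
        intro i; rw [pow_add]; ring
      have htail2 : (∑' i : ℕ, c (i+n) * x ^ i) = 0 := by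
        have h2 : x^n * (∑' i : ℕ, c (i+n) * x ^ i) = 0 := by
          rw [← tsum_mul_left]
          rw [← htail]
          exact tsum_congr fun i => (hfact i).symm
        rcases mul_eq_zero.mp h2 with h3 | h3
        · exact absurd h3 (pow_ne_zero n hxne)
        · exact h3
      -- summability of shifted series in norm
      have hAne : A ≠ 0 := ne_of_gt hA0
      have hAr : A * r ≤ 1/2 := by
        calc A * r ≤ A * (1/(2*A)) := mul_le_mul_of_nonneg_left hrA (le_of_lt hA0)
          _ = 1/2 := by field_simp
      have hgn : Summable (fun i : ℕ => ‖c (i+n) * x ^ i‖) := by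
        refine Summable.of_nonneg_of_le (fun i => norm_nonneg _)
          (fun i => ?_) (((summable_geometric_of_lt_one (by norm_num) (by norm_num : (1:ℝ)/2 < 1)).mul_left (C * A^n)))
        rw [norm_mul, norm_pow, hxnorm]
        calc ‖c (i+n)‖ * r^i ≤ (C * A^(i+n)) * r^i :=
              mul_le_mul_of_nonneg_right (hbd (i+n)) (by positivity)
          _ = (C * A^n) * ((A*r)^i) := by rw [mul_pow]; ring
          _ ≤ (C * A^n) * ((1/2)^i) := by
              refine mul_le_mul_of_nonneg_left ?_ (by positivity)
              exact pow_le_pow_left₀ (by positivity) hAr i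
      have hg : Summable (fun i : ℕ => c (i+n) * x ^ i) := hgn.of_norm
      have hcn : c n = -(∑' i : ℕ, c (i+n+1) * x ^ (i+1)) := by
        have h1 := hg.tsum_eq_zero_add
        rw [htail2] at h1
        have h0 : c (0+n) * x ^ 0 = c n := by simp
        rw [h0] at h1
        have h2 : c n = -(∑' i : ℕ, c (i+1+n) * x ^ (i+1)) :=
          eq_neg_of_add_eq_zero_left h1.symm
        rw [h2]
        congr 1
        exact tsum_congr fun i => by rw [Nat.add_right_comm i 1 n]
      have hnorm : ‖c n‖ ≤ ∑' i : ℕ, ‖c (i+n+1) * x ^ (i+1)‖ := by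
        rw [hcn, norm_neg]
        refine norm_tsum_le_tsum_norm ?_
        have := (summable_nat_add_iff 1).mpr hgn
        exact this.congr fun i => by rw [Nat.add_right_comm i 1 n]
      have hbound2 : ∀ i : ℕ, ‖c (i+n+1) * x ^ (i+1)‖ ≤ (C*A^(n+1)*r) * (1/2)^i := by
        intro i
        rw [norm_mul, norm_pow, hxnorm]
        calc ‖c (i+n+1)‖ * r^(i+1) ≤ (C * A^(i+n+1)) * r^(i+1) :=
              mul_le_mul_of_nonneg_right (hbd (i+n+1)) (by positivity)
          _ = (C * A^(n+1) * r) * ((A*r)^i) := by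
              rw [mul_pow]; ring
          _ ≤ (C * A^(n+1) * r) * ((1/2)^i) := by
              refine mul_le_mul_of_nonneg_left ?_ (by positivity)
              exact pow_le_pow_left₀ (by positivity) hAr i
      have hsum2 : Summable (fun i : ℕ => (C*A^(n+1)*r) * (1/2:ℝ)^i) :=
        (summable_geometric_of_lt_one (by norm_num) (by norm_num)).mul_left _
      have hsumnorm : Summable (fun i : ℕ => ‖c (i+n+1) * x ^ (i+1)‖) := by
        have := (summable_nat_add_iff 1).mpr hgn
        exact this.congr fun i => by rw [Nat.add_right_comm i 1 n]
      have h5 : (∑' i : ℕ, ‖c (i+n+1) * x ^ (i+1)‖) ≤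
          ∑' i : ℕ, (C*A^(n+1)*r) * (1/2:ℝ)^i :=
        Summable.tsum_le_tsum hbound2 hsumnorm hsum2
      have h6 : (∑' i : ℕ, (C*A^(n+1)*r) * (1/2:ℝ)^i) = (C*A^(n+1)*r) * 2 := by
        rw [tsum_mul_left, tsum_geometric_of_lt_one (by norm_num) (by norm_num)]
        norm_num
      have h7 : ‖c n‖ ≤ K * r := by
        have := le_trans hnorm (le_trans h5 (le_of_eq h6))
        rw [hKdef]; linarith
      have h8 : K * r ≤ ε := by
        have hdiv : K/(K+1) ≤ 1 := by
          rw [div_le_one (by linarith)]; linarith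
        calc K * r ≤ K * (ε/(K+1)) := mul_le_mul_of_nonneg_left hrε hK0
          _ = ε * (K/(K+1)) := by ring
          _ ≤ ε * 1 := mul_le_mul_of_nonneg_left hdiv (le_of_lt hε)
          _ = ε := mul_one ε
      exact le_trans h7 h8
    have : ‖c n‖ ≤ 0 := by
      by_contra hlt
      push_neg at hlt
      have := hsmall (‖c n‖/2) (by linarith)
      linarith
    simpa using norm_le_zero_iff.mp this

noncomputable def recR (a : ℕ → ℝ) : ℕ → ℝ
  | 0 => 1
  | (k+1) => (∑ v ∈ Finset.range (k+1), a v * recR a (k-v)) / ((k : ℝ) + 1)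
  decreasing_by exact Nat.lt_succ_of_le (Nat.sub_le k v)

@[simp] lemma recR_zero (a : ℕ → ℝ) : recR a 0 = 1 := by simp [recR]

lemma recR_succ (a : ℕ → ℝ) (k : ℕ) :
    recR a (k+1) = (∑ v ∈ Finset.range (k+1), a v * recR a (k-v)) / ((k : ℝ) + 1) := by
  rw [recR]

/-- complexified real recursion -/
lemma recC_ofReal (a : ℕ → ℝ) : ∀ k, recC (fun v => ((a v : ℝ) : ℂ)) k = ((recR a k : ℝ) : ℂ) := by
  intro k
  induction k using Nat.strong_induction_on with
  | _ k ih =>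
    match k with
    | 0 => simp
    | (k+1) =>
      rw [recC_succ, recR_succ]
      push_cast
      congr 1
      refine Finset.sum_congr rfl fun v hv => ?_
      rw [ih (k-v) (Nat.lt_succ_of_le (Nat.sub_le k v))]

/-- The Cauchy–Schwarz induction -/
lemma recC_sq_le (b : ℕ → ℂ) : ∀ k, ‖recC b k‖^2 ≤ recR (fun v => ‖b v‖^2) k := by
  set a : ℕ → ℝ := fun v => ‖b v‖^2 with hadef
  intro k
  induction k using Nat.strong_induction_on with
  | _ k ih =>
    match k with
    | 0 => simp
    | (k+1) =>
      have hk1 : (0:ℝ) < (k:ℝ)+1 := by positivity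
      rw [recC_succ, norm_div, norm_cast_succ, div_pow]
      have hS : (∑ v ∈ Finset.range (k+1), a v * recR a (k-v)) = ((k:ℝ)+1) * recR a (k+1) := by
        rw [recR_succ, mul_div_cancel₀ _ (ne_of_gt hk1)]
      have h1 : ‖∑ v ∈ Finset.range (k+1), b v * recC b (k-v)‖ ≤
          ∑ v ∈ Finset.range (k+1), ‖b v‖ * ‖recC b (k-v)‖ :=
        (norm_sum_le _ _).trans_eq (Finset.sum_congr rfl fun v _ => norm_mul _ _)
      have h2 : ‖∑ v ∈ Finset.range (k+1), b v * recC b (k-v)‖^2 ≤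
          (∑ v ∈ Finset.range (k+1), ‖b v‖ * ‖recC b (k-v)‖)^2 :=
        pow_le_pow_left₀ (norm_nonneg _) h1 2
      have h3 : (∑ v ∈ Finset.range (k+1), ‖b v‖ * ‖recC b (k-v)‖)^2 ≤
          (∑ v ∈ Finset.range (k+1), (1:ℝ)^2) *
          (∑ v ∈ Finset.range (k+1), (‖b v‖ * ‖recC b (k-v)‖)^2) := by
        have := sum_mul_sq_le_sq_mul_sq (Finset.range (k+1)) (fun _ => (1:ℝ))
          (fun v => ‖b v‖ * ‖recC b (k-v)‖)
        simpa using this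
      have hcard : (∑ v ∈ Finset.range (k+1), (1:ℝ)^2) = (k:ℝ)+1 := by
        simp [Finset.sum_const, Finset.card_range]
      have h4 : (∑ v ∈ Finset.range (k+1), (‖b v‖ * ‖recC b (k-v)‖)^2) ≤
          ∑ v ∈ Finset.range (k+1), a v * recR a (k-v) := by
        refine Finset.sum_le_sum fun v hv => ?_
        rw [mul_pow]
        exact mul_le_mul_of_nonneg_left (ih (k-v) (Nat.lt_succ_of_le (Nat.sub_le k v)))
          (by positivity)
      have hnum : ‖∑ v ∈ Finset.range (k+1), b v * recC b (k-v)‖^2 ≤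
          ((k:ℝ)+1) * (((k:ℝ)+1) * recR a (k+1)) := by
        calc ‖∑ v ∈ Finset.range (k+1), b v * recC b (k-v)‖^2
            ≤ (∑ v ∈ Finset.range (k+1), ‖b v‖ * ‖recC b (k-v)‖)^2 := h2
          _ ≤ (∑ v ∈ Finset.range (k+1), (1:ℝ)^2) *
              (∑ v ∈ Finset.range (k+1), (‖b v‖ * ‖recC b (k-v)‖)^2) := h3
          _ = ((k:ℝ)+1) * (∑ v ∈ Finset.range (k+1), (‖b v‖ * ‖recC b (k-v)‖)^2) := by
              rw [hcard]
          _ ≤ ((k:ℝ)+1) * (∑ v ∈ Finset.range (k+1), a v * recR a (k-v)) :=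
              mul_le_mul_of_nonneg_left h4 (by positivity)
          _ = ((k:ℝ)+1) * (((k:ℝ)+1) * recR a (k+1)) := by rw [hS]
      calc ‖∑ v ∈ Finset.range (k+1), b v * recC b (k-v)‖^2 / (((k:ℝ)+1)^2)
          ≤ (((k:ℝ)+1) * (((k:ℝ)+1) * recR a (k+1))) / (((k:ℝ)+1)^2) :=
            (div_le_div_iff_of_pos_right (by positivity)).mpr hnum
        _ = recR a (k+1) := by field_simp


lemma coeff_unique {c c' : ℕ → ℂ} {δ : ℝ} (hδ : 0 < δ) {f : ℂ → ℂ}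
    (h : ∀ x : ℂ, ‖x‖ < δ → HasSum (fun k : ℕ => c k * x ^ k) (f x))
    (h' : ∀ x : ℂ, ‖x‖ < δ → HasSum (fun k : ℕ => c' k * x ^ k) (f x)) :
    ∀ k, c k = c' k := by
  have h0 : ∀ x : ℂ, ‖x‖ < δ → HasSum (fun k : ℕ => (c k - c' k) * x ^ k) 0 := by
    intro x hx
    have hsub := (h x hx).sub (h' x hx)
    rw [sub_self] at hsub
    simpa only [sub_mul] using hsub
  exact fun k => sub_eq_zero.mp (coeff_eq_zero hδ h0 k)

theorem stmt_4 (d : ℕ) (α : Fin d → ℂ) (lam : ℕ → ℂ) (mu : ℕ → ℝ)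
    (hlam : ∃ δ > 0, ∀ x : ℂ, ‖x‖ < δ →
      HasSum (fun k : ℕ => lam k * x ^ k)
        (Complex.exp (∑' v : ℕ, (∑ j, α j ^ (v + 1)) * x ^ (v + 1) / ((v : ℂ) + 1))))
    (hmu : ∃ δ > 0, ∀ x : ℂ, ‖x‖ < δ →
      HasSum (fun k : ℕ => (mu k : ℂ) * x ^ k)
        (Complex.exp (∑' v : ℕ,
          ((‖∑ j, α j ^ (v + 1)‖ : ℂ)) ^ 2 * x ^ (v + 1) / ((v : ℂ) + 1)))) :
    ∀ k : ℕ, ‖lam k‖ ^ 2 ≤ mu k := by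
  obtain ⟨δ₁, hδ₁, h1⟩ := hlam
  obtain ⟨δ₂, hδ₂, h2⟩ := hmu
  set b : ℕ → ℂ := fun v => ∑ j, α j ^ (v+1) with hbdef
  have hsum_nonneg : (0:ℝ) ≤ ∑ j, ‖α j‖ := Finset.sum_nonneg fun j _ => norm_nonneg _
  set B : ℝ := ((d:ℝ)+1) * (1 + ∑ j, ‖α j‖) with hBdef
  have hd0 : (0:ℝ) ≤ (d:ℝ) := Nat.cast_nonneg d
  have hB1 : 1 ≤ B := by rw [hBdef]; nlinarith
  have hB0 : (0:ℝ) < B := lt_of_lt_of_le one_pos hB1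
  have hb : ∀ v, ‖b v‖ ≤ B^(v+1) := by
    intro v
    have hsum : ‖b v‖ ≤ ∑ j, ‖α j‖^(v+1) :=
      (norm_sum_le _ _).trans (le_of_eq (Finset.sum_congr rfl fun j _ => norm_pow _ _))
    have hterm : ∀ j, ‖α j‖^(v+1) ≤ (1 + ∑ i, ‖α i‖)^(v+1) := by
      intro j
      refine pow_le_pow_left₀ (norm_nonneg _) ?_ _
      have := Finset.single_le_sum (f := fun i => ‖α i‖) (fun i _ => norm_nonneg _)
        (Finset.mem_univ j)
      linarith
    calc ‖b v‖ ≤ ∑ j, ‖α j‖^(v+1) := hsum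
      _ ≤ ∑ _j : Fin d, (1 + ∑ i, ‖α i‖)^(v+1) := Finset.sum_le_sum fun j _ => hterm j
      _ = (d:ℝ) * (1 + ∑ i, ‖α i‖)^(v+1) := by
          rw [Finset.sum_const, Finset.card_univ, Fintype.card_fin, nsmul_eq_mul]
      _ ≤ ((d:ℝ)+1)^(v+1) * (1 + ∑ i, ‖α i‖)^(v+1) := by
          refine mul_le_mul_of_nonneg_right ?_ (by positivity)
          calc (d:ℝ) ≤ (d:ℝ)+1 := by linarith
            _ ≤ ((d:ℝ)+1)^(v+1) := le_self_pow₀ (by linarith) (by omega)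
      _ = B^(v+1) := by rw [hBdef, mul_pow]
  have hδp1 : 0 < min δ₁ (1/(8*B)) := lt_min hδ₁ (by positivity)
  have hlam_eq : ∀ k, lam k = recC b k := by
    refine coeff_unique hδp1
      (f := fun x => Complex.exp (∑' v : ℕ, b v * x^(v+1)/((v:ℂ)+1))) ?_ ?_
    · intro x hx; exact h1 x (lt_of_lt_of_le hx (min_le_left _ _))
    · intro x hx; exact exp_eq b B hB1 hb (lt_of_lt_of_le hx (min_le_right _ _))
  set b2 : ℕ → ℂ := fun v => ((‖b v‖ : ℝ) : ℂ)^2 with hb2def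
  have hb2 : ∀ v, ‖b2 v‖ ≤ (B^2)^(v+1) := by
    intro v
    have hnb2 : ‖b2 v‖ = ‖b v‖^2 := by
      have habs : ‖(((‖b v‖ : ℝ)) : ℂ)‖ = ‖b v‖ := by
        rw [Complex.norm_real, Real.norm_eq_abs, abs_of_nonneg (norm_nonneg _)]
      show ‖(((‖b v‖ : ℝ)) : ℂ)^2‖ = ‖b v‖^2
      rw [norm_pow, habs]
    rw [hnb2]
    calc ‖b v‖^2 ≤ (B^(v+1))^2 := pow_le_pow_left₀ (norm_nonneg _) (hb v) 2
      _ = (B^2)^(v+1) := by rw [← pow_mul, ← pow_mul, Nat.mul_comm]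
  have hB21 : 1 ≤ B^2 := by nlinarith
  have hδp2 : 0 < min δ₂ (1/(8*B^2)) := lt_min hδ₂ (by positivity)
  have hmu_eq : ∀ k, (mu k : ℂ) = recC b2 k := by
    refine coeff_unique hδp2
      (f := fun x => Complex.exp (∑' v : ℕ, b2 v * x^(v+1)/((v:ℂ)+1))) ?_ ?_
    · intro x hx; exact h2 x (lt_of_lt_of_le hx (min_le_left _ _))
    · intro x hx; exact exp_eq b2 (B^2) hB21 hb2 (lt_of_lt_of_le hx (min_le_right _ _))
  set a : ℕ → ℝ := fun v => ‖b v‖^2 with hadef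
  have hb2a : b2 = fun v => ((a v : ℝ) : ℂ) := by
    funext v
    rw [hb2def, hadef]
    simp only [← Complex.ofReal_pow]
  have hmu_real : ∀ k, mu k = recR a k := by
    intro k
    have h3 := hmu_eq k
    rw [hb2a, recC_ofReal] at h3
    exact_mod_cast h3
  intro k
  rw [hmu_real k, hlam_eq k]
  exact recC_sq_le b k
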